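/- Let S and S' be finite index sets, W a finite set of work values, and β > 0. Suppose P(s',w|s) is a conditional probability distribution (nonnegative, with ∑_{s',w} P(s',w|s) = 1 for each s) satisfying the Gibbs-stochastic condition ∑_{s,w} P(s',w|s)·exp(β(E_{s'} − E_s + w)) = 1 for all s'. Then for any initial probability distribution P(s) on S with P(s) > 0 for all s, defining f_s = E_s + (1/β)·ln P(s) and f_{s'} = E_{s'} + (1/β)·ln P(s') where P(s') = ∑_{s,w} P(s',w|s)·P(s) (assumed positive), one has the second law equality: ∑_{s,s',w} P(s)·P(s',w|s)·exp(β(f_{s'} − f_s + w)) = 1. -/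

import Mathlib

open Real Finset

/-- Classical Second Law Equality: under the fluctuating-work Gibbs-stochastic
condition, for any positive initial distribution the expectation of
`exp (β (f_{s'} - f_s + w))` equals 1, where `f_s = E_s + β⁻¹ log P(s)`. -/
theorem second_law_equality
    {S S' W : Type*} [Fintype S] [Fintype S'] [Fintype W]
    (E : S → ℝ) (E' : S' → ℝ) (wv : W → ℝ) (β : ℝ) (hβ : 0 < β)
    (P : S' → W → S → ℝ)
    (hPnn : ∀ s' w s, 0 ≤ P s' w s)
    (hPnorm : ∀ s, ∑ s', ∑ w, P s' w s = 1)
    (hGibbs : ∀ s', ∑ s, ∑ w, P s' w s * Real.exp (β * (E' s' - E s + wv w)) = 1)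
    (p : S → ℝ) (hp : ∀ s, 0 < p s) (hpnorm : ∑ s, p s = 1)
    (q : S' → ℝ) (hq : ∀ s', q s' = ∑ s, ∑ w, P s' w s * p s)
    (hqpos : ∀ s', 0 < q s')
    (f : S → ℝ) (hf : ∀ s, f s = E s + (1 / β) * Real.log (p s))
    (f' : S' → ℝ) (hf' : ∀ s', f' s' = E' s' + (1 / β) * Real.log (q s')) :
    ∑ s, ∑ s', ∑ w,
      p s * P s' w s * Real.exp (β * (f' s' - f s + wv w)) = 1 := by
  have key : ∀ s s' w, p s * P s' w s * Real.exp (β * (f' s' - f s + wv w))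
      = q s' * (P s' w s * Real.exp (β * (E' s' - E s + wv w))) := by
    intro s s' w
    have hps := hp s
    have hqs := hqpos s'
    have hβ' : β ≠ 0 := ne_of_gt hβ
    have harg : β * (f' s' - f s + wv w)
        = β * (E' s' - E s + wv w) + Real.log (q s') - Real.log (p s) := by
      rw [hf, hf']; field_simp; ring
    rw [harg, sub_eq_add_neg, Real.exp_add, Real.exp_add,
        Real.exp_log hqs, Real.exp_neg, Real.exp_log hps]
    field_simp
  calc ∑ s, ∑ s', ∑ w, p s * P s' w s * Real.exp (β * (f' s' - f s + wv w))
      = ∑ s', ∑ s, ∑ w, q s' * (P s' w s * Real.exp (β * (E' s' - E s + wv w))) := by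
        rw [Finset.sum_comm]
        refine Finset.sum_congr rfl fun s' _ => Finset.sum_congr rfl fun s _ =>
          Finset.sum_congr rfl fun w _ => key s s' w
    _ = ∑ s', q s' := by
        refine Finset.sum_congr rfl fun s' _ => ?_
        simp only [← Finset.mul_sum]
        rw [hGibbs s', mul_one]
    _ = ∑ s, p s := by
        simp only [hq]
        rw [Finset.sum_comm]
        refine Finset.sum_congr rfl fun s _ => ?_
        rw [Finset.sum_comm]
        simp only [← Finset.sum_mul]
        rw [Finset.sum_comm, hPnorm s, one_mul]
    _ = 1 := hpnorm
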